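/- For the rotational surface of hyperbolic type with ε = sign of ⟨z_uu − (tangential part), ·⟩ as given, the Minkowski inner products satisfy ⟨n₁, n₁⟩ = ε, ⟨n₂, n₂⟩ = −ε, and ⟨n₁, n₂⟩ = 0, where n₁ = (1/κ)(x₁'', x₂'', r''·sinh v, r''·cosh v) and n₂ = (1/κ)(x₂'r'' − x₂''r', r'x₁'' − x₁'r'', (x₂'x₁'' − x₁'x₂'')·sinh v, (x₂'x₁'' − x₁'x₂'')·cosh v). -/

import Mathlib

noncomputable section
open Real

/-- Minkowski inner product of signature (3,1) on ℝ⁴. -/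
def mink (a b : ℝ × ℝ × ℝ × ℝ) : ℝ :=
  a.1 * b.1 + a.2.1 * b.2.1 + a.2.2.1 * b.2.2.1 - a.2.2.2 * b.2.2.2

/-- The normal frame {n₁, n₂} of the hyperbolic rotational surface satisfies
⟨n₁,n₁⟩ = ε, ⟨n₂,n₂⟩ = −ε, ⟨n₁,n₂⟩ = 0. -/
theorem stmt4 (x₁ x₂ r dx₁ dx₂ dr d2x₁ d2x₂ d2r Q κ : ℝ → ℝ) (ε : ℝ)
    (hx₁ : ∀ u, HasDerivAt x₁ (dx₁ u) u)
    (hx₂ : ∀ u, HasDerivAt x₂ (dx₂ u) u)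
    (hr : ∀ u, HasDerivAt r (dr u) u)
    (hdx₁ : ∀ u, HasDerivAt dx₁ (d2x₁ u) u)
    (hdx₂ : ∀ u, HasDerivAt dx₂ (d2x₂ u) u)
    (hdr : ∀ u, HasDerivAt dr (d2r u) u)
    (harc : ∀ u, (dx₁ u)^2 + (dx₂ u)^2 - (dr u)^2 = 1)
    (hQ : ∀ u, Q u = (d2x₁ u)^2 + (d2x₂ u)^2 - (d2r u)^2)
    (hQne : ∀ u, Q u ≠ 0)
    (hε : ∀ u, ε = if 0 < Q u then 1 else -1)
    (hκ : ∀ u, κ u = Real.sqrt (ε * Q u))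
    (u v : ℝ)
    (n₁ n₂ : ℝ × ℝ × ℝ × ℝ)
    (hn₁ : n₁ = (κ u)⁻¹ • ((d2x₁ u, d2x₂ u, d2r u * Real.sinh v, d2r u * Real.cosh v) : ℝ × ℝ × ℝ × ℝ))
    (hn₂ : n₂ = (κ u)⁻¹ • ((dx₂ u * d2r u - d2x₂ u * dr u,
                  dr u * d2x₁ u - dx₁ u * d2r u,
                  (dx₂ u * d2x₁ u - dx₁ u * d2x₂ u) * Real.sinh v,
                  (dx₂ u * d2x₁ u - dx₁ u * d2x₂ u) * Real.cosh v) : ℝ × ℝ × ℝ × ℝ)) :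
    mink n₁ n₁ = ε ∧ mink n₂ n₂ = -ε ∧ mink n₁ n₂ = 0 := by

  -- orthogonality from differentiating the unit-speed condition
  have horth : dx₁ u * d2x₁ u + dx₂ u * d2x₂ u - dr u * d2r u = 0 := by
    have hf : HasDerivAt (fun t => (dx₁ t)^2 + (dx₂ t)^2 - (dr t)^2)
        (2 * dx₁ u * d2x₁ u + 2 * dx₂ u * d2x₂ u - 2 * dr u * d2r u) u := by
      have h1 := ((hdx₁ u).fun_pow 2)
      have h2 := ((hdx₂ u).fun_pow 2)
      have h3 := ((hdr u).fun_pow 2)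
      have := (h1.fun_add h2).fun_sub h3
      exact this.congr_deriv (by norm_num)
    have hc : HasDerivAt (fun t => (dx₁ t)^2 + (dx₂ t)^2 - (dr t)^2) 0 u := by
      have : (fun t => (dx₁ t)^2 + (dx₂ t)^2 - (dr t)^2) = fun _ => (1:ℝ) :=
        funext harc
      rw [this]
      exact hasDerivAt_const u 1
    have := hf.unique hc
    linarith
  have hεQ : 0 < ε * Q u := by
    rcases lt_or_gt_of_ne (hQne u).symm.symm with h | h
    · rw [hε u, if_neg (not_lt.mpr h.le)]; nlinarith
    · rw [hε u, if_pos h]; nlinarith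
  have hk2 : κ u * κ u = ε * Q u := by
    rw [hκ u]; exact Real.mul_self_sqrt hεQ.le
  have hk0 : κ u ≠ 0 := by
    intro h; rw [h] at hk2; nlinarith
  have hε2 : ε * ε = 1 := by
    rw [hε u]; split <;> norm_num
  have hch : Real.cosh v * Real.cosh v = Real.sinh v * Real.sinh v + 1 := by
    have := Real.cosh_sq v; nlinarith
  have hQe := hQ u
  have ha := harc u
  subst hn₁ hn₂
  simp only [mink, Prod.smul_fst, Prod.smul_snd, smul_eq_mul]
  refine ⟨?_, ?_, ?_⟩
  · field_simp
    linear_combination (-ε) * hk2 - Q u * hε2 - hQe - d2r u * d2r u * hch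
  · field_simp
    linear_combination (dx₁ u * d2x₁ u + dx₂ u * d2x₂ u - dr u * d2r u) * horth
      - (d2x₁ u ^ 2 + d2x₂ u ^ 2 - d2r u ^ 2) * ha
      - (dx₂ u * d2x₁ u - dx₁ u * d2x₂ u) ^ 2 * hch
      + ε * hk2 + Q u * hε2 + hQe
  · field_simp
    linear_combination (-(d2r u * (dx₂ u * d2x₁ u - dx₁ u * d2x₂ u))) * hch
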